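/- Let E be a real inner product space, w ∈ E, f_i : E → ℝ differentiable, α > 0, ᾱ > 0 and ψ ≥ 0. Suppose M(θ) = f_i(θ) + (α/2)‖θ − w‖² is ᾱ-strongly convex, and θ* is a ψ-inexact solution, i.e. ‖∇f_i(θ*) + α·(θ* − w)‖ ≤ ψ·‖∇f_i(w)‖. Then ‖θ* − w‖ ≤ ((1 + ψ)/ᾱ)·‖∇f_i(w)‖. -/

import Mathlib

open InnerProductSpace

/-- First-order condition: a convex differentiable function on `univ` lies above its
directional linearization. -/
lemma fedssg_aux_first_order {E : Type*} [NormedAddCommGroup E] [InnerProductSpace ℝ E]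
    {g : E → ℝ} (hg : Differentiable ℝ g) (hconv : ConvexOn ℝ Set.univ g)
    (x d : E) : fderiv ℝ g x d ≤ g (x + d) - g x := by
  set ℓ : ℝ →ᵃ[ℝ] E := AffineMap.lineMap x (x + d) with hℓdef
  have hℓ : ∀ t : ℝ, ℓ t = x + t • d := by
    intro t
    simp [hℓdef, AffineMap.lineMap_apply_module]
    module
  have hφconv : ConvexOn ℝ Set.univ (g ∘ ℓ) := by
    have := hconv.comp_affineMap ℓ
    simpa using this
  have hline : HasDerivAt (fun t : ℝ => ℓ t) d 0 := by
    have h1 : HasDerivAt (fun t : ℝ => x + t • d) ((1 : ℝ) • d) 0 :=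
      ((hasDerivAt_id (0 : ℝ)).smul_const d).const_add x
    simp only [one_smul] at h1
    simpa only [funext hℓ] using h1
  have hφ : HasDerivAt (g ∘ ℓ) (fderiv ℝ g x d) 0 := by
    have h0 : ℓ (0 : ℝ) = x := by simp [hℓ]
    have := (hg (ℓ 0)).hasFDerivAt.comp_hasDerivAt 0 hline
    rwa [h0] at this
  have hs := hφconv.le_slope_of_hasDerivAt (Set.mem_univ (0 : ℝ)) (Set.mem_univ (1 : ℝ))
    one_pos hφ
  have h1 : ℓ (1 : ℝ) = x + d := by simp [hℓ]
  have h0 : ℓ (0 : ℝ) = x := by simp [hℓ]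
  rw [slope_def_field] at hs
  simpa [Function.comp, h0, h1] using hs

/-- A `ψ`-inexact solution of the strongly convex proximal objective stays
within `((1+ψ)/αbar)·‖∇fᵢ(w)‖` of the anchor `w`. -/
theorem fedssg_inexact_solution_near_anchor
    {E : Type*} [NormedAddCommGroup E] [InnerProductSpace ℝ E] [CompleteSpace E]
    (w : E) (fi : E → ℝ) (hfi : Differentiable ℝ fi)
    (α αbar ψ : ℝ) (hα : 0 < α) (hαbar : 0 < αbar) (hψ : 0 ≤ ψ)
    (hstrong : ConvexOn ℝ Set.univ
      (fun θ : E => (fi θ + (α / 2) * ‖θ - w‖ ^ 2) - (αbar / 2) * ‖θ‖ ^ 2))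
    (θstar : E)
    (hinexact : ‖gradient fi θstar + α • (θstar - w)‖ ≤ ψ * ‖gradient fi w‖) :
    ‖θstar - w‖ ≤ ((1 + ψ) / αbar) * ‖gradient fi w‖ := by
  set G : E → ℝ := fun θ : E => (fi θ + (α / 2) * ‖θ - w‖ ^ 2) - (αbar / 2) * ‖θ‖ ^ 2 with hG
  -- differentiability of G
  have hGdiff : Differentiable ℝ G := by
    have h1 : Differentiable ℝ fun θ : E => ‖θ - w‖ ^ 2 := by
      have : Differentiable ℝ fun θ : E => θ - w := differentiable_id.sub_const w
      exact this.norm_sq ℝ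
    have h2 : Differentiable ℝ fun θ : E => ‖θ‖ ^ 2 := differentiable_id.norm_sq ℝ
    exact (hfi.add (h1.const_mul _)).sub (h2.const_mul _)
  -- directional derivative of G at a point θ in direction d
  have hderiv : ∀ θ d : E, fderiv ℝ G θ d
      = inner ℝ (gradient fi θ) d + α * inner ℝ (θ - w) d - αbar * inner ℝ θ d := by
    intro θ d
    have hfd : HasFDerivAt fi (toDual ℝ E (gradient fi θ)) θ :=
      ((hfi θ).hasGradientAt).hasFDerivAt
    have hsub : HasFDerivAt (fun θ : E => θ - w) (ContinuousLinearMap.id ℝ E) θ :=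
      (hasFDerivAt_id θ).sub_const w
    have hn1 : HasFDerivAt (fun θ : E => (inner ℝ (θ - w) (θ - w) : ℝ))
        ((fderivInnerCLM ℝ (θ - w, θ - w)).comp
          ((ContinuousLinearMap.id ℝ E).prod (ContinuousLinearMap.id ℝ E))) θ :=
      hsub.inner ℝ hsub
    have hn2 : HasFDerivAt (fun θ : E => (inner ℝ θ θ : ℝ))
        ((fderivInnerCLM ℝ (θ, θ)).comp
          ((ContinuousLinearMap.id ℝ E).prod (ContinuousLinearMap.id ℝ E))) θ :=
      (hasFDerivAt_id θ).inner ℝ (hasFDerivAt_id θ)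
    have hG1 : HasFDerivAt G
        ((toDual ℝ E (gradient fi θ)
          + (α / 2) • ((fderivInnerCLM ℝ (θ - w, θ - w)).comp
              ((ContinuousLinearMap.id ℝ E).prod (ContinuousLinearMap.id ℝ E))))
          - (αbar / 2) • ((fderivInnerCLM ℝ (θ, θ)).comp
              ((ContinuousLinearMap.id ℝ E).prod (ContinuousLinearMap.id ℝ E)))) θ := by
      have hEq : G = fun θ : E =>
          (fi θ + (α / 2) * (inner ℝ (θ - w) (θ - w) : ℝ))
            - (αbar / 2) * (inner ℝ θ θ : ℝ) := by
        funext θ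
        simp [hG, real_inner_self_eq_norm_sq]
      rw [hEq]
      exact (hfd.add (hn1.const_mul (α / 2))).sub (hn2.const_mul (αbar / 2))
    rw [hG1.fderiv]
    simp [fderivInnerCLM_apply, real_inner_comm, toDual_apply_apply]
    ring
  -- two applications of the first-order condition
  set d : E := θstar - w with hd
  have hA := fedssg_aux_first_order hGdiff hstrong θstar (-d)
  have hB := fedssg_aux_first_order hGdiff hstrong w d
  rw [hderiv] at hA hB
  have hwd : w + d = θstar := by simp [hd]
  have hθd : θstar + -d = w := by simp [hd]
  rw [hwd] at hB
  rw [hθd] at hA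
  -- sum the two inequalities
  have hsum : αbar * inner ℝ d d
      ≤ inner ℝ (gradient fi θstar + α • (θstar - w) - gradient fi w) d := by
    have := add_le_add hA hB
    simp only [inner_neg_right, inner_sub_left, inner_add_left, inner_smul_left,
      sub_self, inner_zero_left, RCLike.star_def, conj_trivial, inner_sub_right] at this ⊢
    have hdd : (inner ℝ d d : ℝ) = (inner ℝ θstar d : ℝ) - inner ℝ w d := by
      rw [hd, inner_sub_left]
    have hdd' : αbar * (inner ℝ d d : ℝ)
        = αbar * ((inner ℝ θstar d : ℝ) - inner ℝ w d) := by rw [hdd]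
    linarith
  -- Cauchy–Schwarz and the inexactness bound
  have hCS : (inner ℝ (gradient fi θstar + α • (θstar - w) - gradient fi w) d : ℝ)
      ≤ (ψ * ‖gradient fi w‖ + ‖gradient fi w‖) * ‖d‖ := by
    calc (inner ℝ (gradient fi θstar + α • (θstar - w) - gradient fi w) d : ℝ)
        ≤ ‖gradient fi θstar + α • (θstar - w) - gradient fi w‖ * ‖d‖ :=
          real_inner_le_norm _ _
      _ ≤ (‖gradient fi θstar + α • (θstar - w)‖ + ‖gradient fi w‖) * ‖d‖ := by
          gcongr; exact norm_sub_le _ _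
      _ ≤ (ψ * ‖gradient fi w‖ + ‖gradient fi w‖) * ‖d‖ := by gcongr
  have hd2 : (inner ℝ d d : ℝ) = ‖d‖ ^ 2 := real_inner_self_eq_norm_sq d
  have hkey : αbar * ‖d‖ ^ 2 ≤ (1 + ψ) * ‖gradient fi w‖ * ‖d‖ := by
    nlinarith [hsum, hCS]
  rcases eq_or_lt_of_le (norm_nonneg d) with h0 | h0
  · rw [← h0]
    positivity
  · rw [div_mul_eq_mul_div, le_div_iff₀ hαbar]
    nlinarith
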